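/- If C is a one-weight Z₂Z₂[u]-cyclic code in R_{r,s} generated by (l(x), g(x) + u·a(x)) with g(x) ≠ 0 reducing to a nonzero polynomial mod u (so the generator has a free R-component), and the weight of C is m, then m = 2s. -/

import Mathlib

open TrivSqZeroExt Polynomial

/-- The four element ring `R = ℤ₂ + u ℤ₂` with `u ^ 2 = 0`, realized as the
dual numbers over `ZMod 2`; the element `u` is `DualNumber.eps`. -/
abbrev Ru : Type := DualNumber (ZMod 2)

instance : Fintype Ru := inferInstanceAs (Fintype (ZMod 2 × ZMod 2))
instance : DecidableEq Ru := inferInstanceAs (DecidableEq (ZMod 2 × ZMod 2))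

/-- The ring homomorphism `η : R → ℤ₂`, `η (p + u q) = p`. -/
noncomputable def eta : Ru →+* ZMod 2 :=
  (TrivSqZeroExt.fstHom (ZMod 2) (ZMod 2) (ZMod 2)).toRingHom

/-- The `R`-module structure on `ℤ₂ʳ × Rˢ`:
`d • (a, b) = (η d * a, d * b)` componentwise. -/
noncomputable instance modM (r s : ℕ) :
    Module Ru ((Fin r → ZMod 2) × (Fin s → Ru)) :=
  letI m1 : Module Ru (ZMod 2) := Module.compHom (ZMod 2) eta
  letI m2 : Module Ru (Fin r → ZMod 2) :=
    @Pi.module (Fin r) (fun _ => ZMod 2) Ru _ _ (fun _ => m1)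
  letI m3 : Module Ru (Fin s → Ru) :=
    @Pi.module (Fin s) (fun _ => Ru) Ru _ _ (fun _ => Semiring.toModule)
  @Prod.instModule _ _ _ _ _ _ m2 m3

/-- Lee weight on `R`: `wt_L 0 = 0`, `wt_L 1 = 1`, `wt_L u = 2`, `wt_L (1+u) = 1`. -/
def leeWt (x : Ru) : ℕ :=
  if TrivSqZeroExt.fst x ≠ 0 then 1 else if TrivSqZeroExt.snd x ≠ 0 then 2 else 0

/-- The weight: Hamming weight on the `ℤ₂`-part plus Lee weight on the `R`-part. -/
def wt {r s : ℕ} (v : (Fin r → ZMod 2) × (Fin s → Ru)) : ℕ :=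
  hammingNorm v.1 + ∑ j, leeWt (v.2 j)

/-- The Gray map `Φ(x, p + u q) = (x, q, p + q)` (componentwise). -/
def gray {r s : ℕ} (v : (Fin r → ZMod 2) × (Fin s → Ru)) :
    Fin (r + 2*s) → ZMod 2 :=
  fun i =>
    Fin.append (Fin.append v.1 (fun j => TrivSqZeroExt.snd (v.2 j)))
      (fun j => TrivSqZeroExt.fst (v.2 j) + TrivSqZeroExt.snd (v.2 j))
      (Fin.cast (by omega) i)

/-- The inner product `⟨v, w⟩ = u·Σ aᵢdᵢ + Σ bⱼeⱼ ∈ R`. -/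
noncomputable def innerP {r s : ℕ} (v w : (Fin r → ZMod 2) × (Fin s → Ru)) : Ru :=
  DualNumber.eps * TrivSqZeroExt.inl (∑ i, v.1 i * w.1 i) + ∑ j, v.2 j * w.2 j

/-- The simultaneous cyclic shift of both blocks. -/
def shiftT {r s : ℕ} (v : (Fin r → ZMod 2) × (Fin s → Ru)) :
    (Fin r → ZMod 2) × (Fin s → Ru) :=
  (fun i => v.1 ⟨(i.val + (r - 1)) % r, Nat.mod_lt _ i.pos⟩,
   fun j => v.2 ⟨(j.val + (s - 1)) % s, Nat.mod_lt _ j.pos⟩)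

/-- The codeword of `ℤ₂ʳ × Rˢ` corresponding to `(l(x), g(x) + u·a(x))`. -/
noncomputable def genword (r s : ℕ) (l g a : Polynomial (ZMod 2)) :
    (Fin r → ZMod 2) × (Fin s → Ru) :=
  (fun i => l.coeff i,
   fun j => TrivSqZeroExt.inl (g.coeff j) + DualNumber.eps * TrivSqZeroExt.inl (a.coeff j))

/-- The cyclic code generated by `(l(x), g(x) + u·a(x))`: the `R`-span of all
simultaneous cyclic shifts of the corresponding codeword. -/
noncomputable def cycCode (r s : ℕ) (l g a : Polynomial (ZMod 2)) :
    Submodule Ru ((Fin r → ZMod 2) × (Fin s → Ru)) :=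
  Submodule.span Ru {v | ∃ k : ℕ, v = shiftT^[k] (genword r s l g a)}

/-- The `γ`-fold replication map `(v_r, v_s) ↦ (v_r, …, v_r, v_s, …, v_s)`. -/
def repMap (γ : ℕ) {r s : ℕ} (v : (Fin r → ZMod 2) × (Fin s → Ru)) :
    (Fin (γ * r) → ZMod 2) × (Fin (γ * s) → Ru) :=
  (fun i => v.1 ⟨i.val % r, Nat.mod_lt _ (by
      rcases Nat.eq_zero_or_pos r with h | h
      · exact absurd i.isLt (by simp [h])
      · exact h)⟩,
   fun j => v.2 ⟨j.val % s, Nat.mod_lt _ (by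
      rcases Nat.eq_zero_or_pos s with h | h
      · exact absurd j.isLt (by simp [h])
      · exact h)⟩)


section OneWtAux

open DualNumber

/-- auxiliary index map: `j ↦ j + i*(s-1) mod s`. -/
def sig (s : ℕ) (hs0 : 0 < s) (i : ℕ) (j : Fin s) : Fin s :=
  ⟨(j.val + i * (s - 1)) % s, Nat.mod_lt _ hs0⟩

lemma sig_zero (s : ℕ) (hs0 : 0 < s) (j : Fin s) : sig s hs0 0 j = j := by
  simp [sig, Nat.mod_eq_of_lt j.isLt]

lemma sig_succ (s : ℕ) (hs0 : 0 < s) (i : ℕ) (j : Fin s) :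
    sig s hs0 (i + 1) j = sig s hs0 i (sig s hs0 1 j) := by
  unfold sig
  apply Fin.ext
  show (j.val + (i+1) * (s-1)) % s = ((j.val + 1 * (s-1)) % s + i * (s-1)) % s
  rw [Nat.mod_add_mod]
  have : j.val + 1 * (s-1) + i * (s-1) = j.val + (i+1) * (s-1) := by ring
  rw [this]

lemma shiftT_iter_snd {r s : ℕ} (hs0 : 0 < s) (k : ℕ)
    (v : (Fin r → ZMod 2) × (Fin s → Ru)) (j : Fin s) :
    (shiftT^[k] v).2 j = v.2 (sig s hs0 k j) := by
  induction k generalizing v with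
  | zero => simp [sig_zero]
  | succ k ih =>
    rw [Function.iterate_succ_apply, ih (shiftT v)]
    show v.2 ⟨((sig s hs0 k j).val + (s-1)) % s, _⟩ = _
    apply congrArg
    apply Fin.ext
    show ((j.val + k * (s-1)) % s + (s-1)) % s = (j.val + (k+1) * (s-1)) % s
    rw [Nat.mod_add_mod]
    have : j.val + k * (s-1) + (s-1) = j.val + (k+1) * (s-1) := by ring
    rw [this]

lemma sig_injective (s : ℕ) (hs0 : 0 < s) (j : Fin s) :
    Function.Injective (fun i : Fin s => sig s hs0 i.val j) := by
  intro i1 i2 h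
  have h' : (j.val + i1.val * (s-1)) % s = (j.val + i2.val * (s-1)) % s :=
    congrArg Fin.val h
  have hmod : Nat.ModEq s (j.val + i1.val * (s-1)) (j.val + i2.val * (s-1)) := h'
  have hmod2 : Nat.ModEq s (i1.val * (s-1)) (i2.val * (s-1)) :=
    Nat.ModEq.add_left_cancel' j.val hmod
  have hcop : Nat.gcd s (s-1) = 1 := by
    rw [Nat.gcd_comm]
    have hss : s = (s-1) + 1 := by omega
    rw [hss, Nat.gcd_comm, Nat.gcd_rec]
    simp
  have hfin : Nat.ModEq s i1.val i2.val :=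
    Nat.ModEq.cancel_right_of_coprime hcop hmod2
  apply Fin.ext
  unfold Nat.ModEq at hfin
  rwa [Nat.mod_eq_of_lt i1.isLt, Nat.mod_eq_of_lt i2.isLt] at hfin

lemma sig_bijective (s : ℕ) (hs0 : 0 < s) (j : Fin s) :
    Function.Bijective (fun i : Fin s => sig s hs0 i.val j) :=
  (Finite.injective_iff_bijective).1 (sig_injective s hs0 j)

lemma sig_one_bijective (s : ℕ) (hs0 : 0 < s) :
    Function.Bijective (fun j : Fin s => sig s hs0 1 j) := by
  apply (Finite.injective_iff_bijective).1
  intro j1 j2 h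
  have h' : (j1.val + 1 * (s-1)) % s = (j2.val + 1 * (s-1)) % s := congrArg Fin.val h
  have hmod : Nat.ModEq s (j1.val + 1 * (s-1)) (j2.val + 1 * (s-1)) := h'
  have hmod2 : Nat.ModEq s j1.val j2.val := hmod.add_right_cancel' _
  apply Fin.ext
  unfold Nat.ModEq at hmod2
  rwa [Nat.mod_eq_of_lt j1.isLt, Nat.mod_eq_of_lt j2.isLt] at hmod2

/-- the weight of a vector, split into the three contributions. -/
lemma wt_eq {r s : ℕ} (v : (Fin r → ZMod 2) × (Fin s → Ru)) :
    wt v = hammingNorm v.1 +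
      ((Finset.univ.filter (fun j : Fin s => TrivSqZeroExt.fst (v.2 j) ≠ 0)).card
       + 2 * (Finset.univ.filter (fun j : Fin s =>
            TrivSqZeroExt.fst (v.2 j) = 0 ∧ TrivSqZeroExt.snd (v.2 j) ≠ 0)).card) := by
  unfold wt
  congr 1
  have hpt : ∀ x : Ru, leeWt x =
      (if TrivSqZeroExt.fst x ≠ 0 then 1 else 0)
      + 2 * (if TrivSqZeroExt.fst x = 0 ∧ TrivSqZeroExt.snd x ≠ 0 then 1 else 0) := by
    intro x
    unfold leeWt
    split_ifs <;> simp_all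
  simp only [hpt]
  rw [Finset.sum_add_distrib, ← Finset.mul_sum]
  rw [Finset.card_filter, Finset.card_filter]

def Ncard (s : ℕ) (g : Polynomial (ZMod 2)) : ℕ :=
  (Finset.univ.filter (fun j : Fin s => g.coeff j.val ≠ 0)).card

def Zcard (s : ℕ) (g : Polynomial (ZMod 2)) : ℕ :=
  (Finset.univ.filter (fun j : Fin s => g.coeff j.val = 0)).card

def Fcard (s : ℕ) (hs0 : 0 < s) (g a : Polynomial (ZMod 2)) (i : ℕ) : ℕ :=
  (Finset.univ.filter (fun j : Fin s =>
    g.coeff j.val = 0 ∧ a.coeff j.val + g.coeff (sig s hs0 i j).val ≠ 0)).card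

lemma NZcard (s : ℕ) (g : Polynomial (ZMod 2)) : Ncard s g + Zcard s g = s := by
  unfold Ncard Zcard
  have := Finset.card_filter_add_card_filter_not
    (s := (Finset.univ : Finset (Fin s))) (p := fun j => g.coeff j.val ≠ 0)
  simp only [not_not] at this
  simpa using this

/-- the key double-counting identity: if `Fcard` is independent of the shift,
then the number of zero coefficients of `g` is even. -/
lemma z_eq (s : ℕ) (hs0 : 0 < s) (g a : Polynomial (ZMod 2))
    (hN : 0 < Ncard s g)
    (hconst : ∀ i : ℕ, Fcard s hs0 g a i = Fcard s hs0 g a 0) :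
    Zcard s g = 2 * Fcard s hs0 g a 0 := by
  set N := Ncard s g with hNdef
  set z := Zcard s g with hzdef
  set τ := (Finset.univ.filter (fun j : Fin s =>
      g.coeff j.val = 0 ∧ a.coeff j.val ≠ 0)).card with hτdef
  have hF0 : Fcard s hs0 g a 0 = τ := by
    unfold Fcard
    rw [hτdef]
    apply congrArg
    apply Finset.filter_congr
    intro j _
    simp only [sig_zero]
    constructor
    · rintro ⟨h1, h2⟩
      refine ⟨h1, ?_⟩
      rwa [h1, add_zero] at h2
    · rintro ⟨h1, h2⟩
      refine ⟨h1, ?_⟩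
      rwa [h1, add_zero]
  have hτz : τ ≤ z := by
    rw [hτdef, hzdef]
    unfold Zcard
    apply Finset.card_le_card
    intro j hj
    simp only [Finset.mem_filter] at hj ⊢
    exact ⟨hj.1, hj.2.1⟩
  have hsum1 : ∑ i : Fin s, Fcard s hs0 g a i.val = s * τ := by
    calc ∑ i : Fin s, Fcard s hs0 g a i.val
        = ∑ _i : Fin s, τ := by
          apply Finset.sum_congr rfl
          intro i _
          rw [hconst i.val, hF0]
      _ = s * τ := by simp [Finset.sum_const, Fintype.card_fin]
  have hsum2 : ∑ i : Fin s, Fcard s hs0 g a i.val = τ * z + (z - τ) * N := by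
    have hswap : ∑ i : Fin s, Fcard s hs0 g a i.val
        = ∑ j : Fin s, ∑ i : Fin s, (if g.coeff j.val = 0 ∧
            a.coeff j.val + g.coeff (sig s hs0 i.val j).val ≠ 0 then 1 else 0) := by
      unfold Fcard
      simp only [Finset.card_filter]
      exact Finset.sum_comm
    have hjeval : ∀ j : Fin s,
        (∑ i : Fin s, (if g.coeff j.val = 0 ∧
            a.coeff j.val + g.coeff (sig s hs0 i.val j).val ≠ 0 then 1 else 0))
        = if g.coeff j.val = 0 then (if a.coeff j.val ≠ 0 then z else N) else 0 := by
      intro j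
      by_cases hgj : g.coeff j.val = 0
      · rw [if_pos hgj]
        simp only [hgj, true_and]
        have hb := sig_bijective s hs0 j
        have hcomp : (∑ i : Fin s,
            (if a.coeff j.val + g.coeff ((fun i : Fin s => sig s hs0 i.val j) i).val ≠ 0
              then 1 else 0))
            = ∑ k : Fin s, (if a.coeff j.val + g.coeff k.val ≠ 0 then 1 else 0) :=
          hb.sum_comp (fun k => if a.coeff j.val + g.coeff k.val ≠ 0 then 1 else 0)
        rw [hcomp]
        by_cases haj : a.coeff j.val = 0
        · rw [if_neg (by simp [haj])]
          simp only [haj, zero_add]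
          rw [hNdef]
          unfold Ncard
          rw [Finset.card_filter]
        · rw [if_pos haj]
          have ha1 : a.coeff j.val = 1 := by
            have : ∀ x : ZMod 2, x ≠ 0 → x = 1 := by decide
            exact this _ haj
          have hiff : ∀ x : ZMod 2, ((1 : ZMod 2) + x ≠ 0) ↔ (x = 0) := by decide
          simp only [ha1, hiff]
          rw [hzdef]
          unfold Zcard
          rw [Finset.card_filter]
      · simp [hgj]
    rw [hswap, Finset.sum_congr rfl (fun j _ => hjeval j), ← Finset.sum_filter,
      Finset.sum_ite, Finset.sum_const, Finset.sum_const, smul_eq_mul, smul_eq_mul,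
      Finset.filter_filter, Finset.filter_filter]
    have hpart := Finset.card_filter_add_card_filter_not
      (s := Finset.univ.filter (fun j : Fin s => g.coeff j.val = 0))
      (p := fun j : Fin s => a.coeff j.val ≠ 0)
    rw [Finset.filter_filter, Finset.filter_filter] at hpart
    have hc2 : (Finset.univ.filter (fun j : Fin s =>
        g.coeff j.val = 0 ∧ ¬ a.coeff j.val ≠ 0)).card = z - τ := by
      have : (Finset.univ.filter (fun j : Fin s => g.coeff j.val = 0)).card = z := rfl
      omega
    rw [hc2]
  have heq : s * τ = τ * z + (z - τ) * N := by rw [← hsum1, hsum2]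
  have hNz : N + z = s := NZcard s g
  have hexp : (N + z) * τ = N * τ + τ * z := by ring
  have h2 : τ * N = (z - τ) * N := by
    have : N * τ = (z - τ) * N := by
      rw [← hNz] at heq
      rw [hexp] at heq
      omega
    rw [mul_comm]
    exact this
  have h3 : τ = z - τ := Nat.eq_of_mul_eq_mul_right hN h2
  rw [hF0]
  omega

-- componentwise descriptions of the module operations (definitional)
lemma comp_add_fst {r s : ℕ} (v w : (Fin r → ZMod 2) × (Fin s → Ru)) (i : Fin r) :
    (v + w).1 i = v.1 i + w.1 i := rfl
lemma comp_add_snd {r s : ℕ} (v w : (Fin r → ZMod 2) × (Fin s → Ru)) (j : Fin s) :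
    (v + w).2 j = v.2 j + w.2 j := rfl
lemma comp_smul_fst {r s : ℕ} (d : Ru) (v : (Fin r → ZMod 2) × (Fin s → Ru)) (i : Fin r) :
    (d • v).1 i = eta d * v.1 i := rfl
lemma comp_smul_snd {r s : ℕ} (d : Ru) (v : (Fin r → ZMod 2) × (Fin s → Ru)) (j : Fin s) :
    (d • v).2 j = d * v.2 j := rfl
lemma comp_zero_fst {r s : ℕ} (i : Fin r) :
    (0 : (Fin r → ZMod 2) × (Fin s → Ru)).1 i = 0 := rfl
lemma comp_zero_snd {r s : ℕ} (j : Fin s) :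
    (0 : (Fin r → ZMod 2) × (Fin s → Ru)).2 j = 0 := rfl
lemma genword_fst (r s : ℕ) (l g a : Polynomial (ZMod 2)) (i : Fin r) :
    (genword r s l g a).1 i = l.coeff i.val := rfl
lemma genword_snd (r s : ℕ) (l g a : Polynomial (ZMod 2)) (j : Fin s) :
    (genword r s l g a).2 j
      = TrivSqZeroExt.inl (g.coeff j.val) + eps * TrivSqZeroExt.inl (a.coeff j.val) := rfl

lemma eta_eps : eta eps = 0 := rfl

lemma entry_fst (c d : ZMod 2) :
    TrivSqZeroExt.fst ((TrivSqZeroExt.inl c : Ru) + eps * TrivSqZeroExt.inl d) = c := by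
  simp

lemma entry_snd (c d : ZMod 2) :
    TrivSqZeroExt.snd ((TrivSqZeroExt.inl c : Ru) + eps * TrivSqZeroExt.inl d) = d := by
  simp

lemma eps_entry (c d : ZMod 2) :
    eps * ((TrivSqZeroExt.inl c : Ru) + eps * TrivSqZeroExt.inl d)
      = (TrivSqZeroExt.inr c : Ru) := by
  ext <;> simp

end OneWtAux

set_option synthInstance.maxHeartbeats 1000000 in
set_option maxHeartbeats 1600000 in
/-- if `C` is a one-weight `ℤ₂ℤ₂[u]`-cyclic code generated by
`(l(x), g(x) + u·a(x))` with `g ≠ 0` (mod `u`), `a ∣ g ∣ x^s − 1`, `s` odd, and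
weight `m`, then `m = 2s`. -/
theorem one_weight_cyclic_weight (r s : ℕ) (hs : Odd s)
    (l g a : Polynomial (ZMod 2))
    (hl : l.natDegree < r) (hgd : g.natDegree < s) (had : a.natDegree < s)
    (hg0 : g ≠ 0) (hag : a ∣ g) (hgs : g ∣ (X ^ s - 1)) (m : ℕ)
    (hone : ∀ c ∈ cycCode r s l g a, c ≠ 0 → wt c = m) :
    m = 2 * s := by
  classical
  have hs0 : 0 < s := lt_of_le_of_lt (Nat.zero_le _) hgd
  have hmem : ∀ k : ℕ, shiftT^[k] (genword r s l g a) ∈ cycCode r s l g a :=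
    fun k => Submodule.subset_span ⟨k, rfl⟩
  have hmem0 : genword r s l g a ∈ cycCode r s l g a := hmem 0
  set j0 : Fin s := ⟨g.natDegree, hgd⟩ with hj0def
  have hj0 : g.coeff j0.val ≠ 0 := fun h => hg0 (Polynomial.leadingCoeff_eq_zero.mp h)
  have hNpos : 0 < Ncard s g := by
    unfold Ncard
    apply Finset.card_pos.mpr
    exact ⟨j0, Finset.mem_filter.mpr ⟨Finset.mem_univ _, hj0⟩⟩
  -- Step A : the codeword u•v₀ has weight 2 N, so m = 2 N.
  have hmA : m = 2 * Ncard s g := by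
    set w0 := (DualNumber.eps : Ru) • (genword r s l g a) with hw0
    have h1 : w0.1 = fun _ : Fin r => (0 : ZMod 2) := by
      funext i
      rw [hw0, comp_smul_fst, eta_eps, zero_mul]
    have h2 : ∀ j : Fin s, w0.2 j = (TrivSqZeroExt.inr (g.coeff j.val) : Ru) := by
      intro j
      rw [hw0, comp_smul_snd, genword_snd, eps_entry]
    have hnz : w0 ≠ 0 := by
      intro h
      apply hj0
      have := congrArg (fun v : (Fin r → ZMod 2) × (Fin s → Ru) =>
        TrivSqZeroExt.snd (v.2 j0)) h
      simpa [h2 j0, comp_zero_snd] using this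
    have hwt : wt w0 = 2 * Ncard s g := by
      rw [wt_eq, h1]
      simp only [h2, TrivSqZeroExt.fst_inr, TrivSqZeroExt.snd_inr, ne_eq,
        not_true_eq_false, false_and, not_false_eq_true]
      rw [show hammingNorm (fun _ : Fin r => (0 : ZMod 2)) = 0 by
        simp [hammingNorm]]
      simp [Ncard]
    have := hone w0 (Submodule.smul_mem _ _ hmem0) hnz
    rw [← this, hwt]
  -- Step B : the codewords v₀ + u•σⁱv₀ all have the same weight, hence Fcard const.
  have hB : ∀ i : ℕ,
      hammingNorm (fun i' : Fin r => l.coeff i'.val) + (Ncard s g + 2 * Fcard s hs0 g a i)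
        = m := by
    intro i
    set B := genword r s l g a + (DualNumber.eps : Ru) • (shiftT^[i] (genword r s l g a)) with hBdef
    have h1 : B.1 = fun i' : Fin r => l.coeff i'.val := by
      funext i'
      rw [hBdef, comp_add_fst, comp_smul_fst, eta_eps, zero_mul, add_zero, genword_fst]
    have h2f : ∀ j : Fin s, TrivSqZeroExt.fst (B.2 j) = g.coeff j.val := by
      intro j
      rw [hBdef, comp_add_snd, comp_smul_snd, genword_snd,
        shiftT_iter_snd hs0, genword_snd, eps_entry]
      simp
    have h2s : ∀ j : Fin s, TrivSqZeroExt.snd (B.2 j)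
        = a.coeff j.val + g.coeff (sig s hs0 i j).val := by
      intro j
      rw [hBdef, comp_add_snd, comp_smul_snd, genword_snd,
        shiftT_iter_snd hs0, genword_snd, eps_entry]
      simp
    have hnz : B ≠ 0 := by
      intro h
      apply hj0
      have := congrArg (fun v : (Fin r → ZMod 2) × (Fin s → Ru) =>
        TrivSqZeroExt.fst (v.2 j0)) h
      simpa [h2f j0, comp_zero_snd] using this
    have hmemB : B ∈ cycCode r s l g a :=
      Submodule.add_mem _ hmem0 (Submodule.smul_mem _ _ (hmem i))
    have hwt := hone B hmemB hnz
    rw [wt_eq, h1] at hwt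
    rw [← hwt]
    congr 1
    congr 1
    · unfold Ncard
      apply congrArg
      apply Finset.filter_congr
      intro j _
      rw [h2f j]
    · unfold Fcard
      congr 1
      apply congrArg
      apply Finset.filter_congr
      intro j _
      rw [h2f j, h2s j]
  have hconst : ∀ i : ℕ, Fcard s hs0 g a i = Fcard s hs0 g a 0 := by
    intro i
    have := hB i
    have := hB 0
    omega
  have hz : Zcard s g = 2 * Fcard s hs0 g a 0 := z_eq s hs0 g a hNpos hconst
  -- N is odd
  have hNodd : Ncard s g % 2 = 1 := by
    have := NZcard s g
    obtain ⟨t, ht⟩ := hs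
    omega
  -- Step C : g must be shift invariant
  have hshift : ∀ j : Fin s, g.coeff (sig s hs0 1 j).val = g.coeff j.val := by
    by_contra hne
    push_neg at hne
    obtain ⟨j1, hj1⟩ := hne
    set w2 := (DualNumber.eps : Ru) • (genword r s l g a) + (DualNumber.eps : Ru) • (shiftT^[1] (genword r s l g a)) with hw2
    have h1 : w2.1 = fun _ : Fin r => (0 : ZMod 2) := by
      funext i'
      rw [hw2, comp_add_fst, comp_smul_fst, comp_smul_fst, eta_eps, zero_mul, zero_mul,
        add_zero]
    have h2 : ∀ j : Fin s, w2.2 j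
        = (TrivSqZeroExt.inr (g.coeff j.val + g.coeff (sig s hs0 1 j).val) : Ru) := by
      intro j
      rw [hw2, comp_add_snd, comp_smul_snd, comp_smul_snd, genword_snd,
        shiftT_iter_snd hs0, genword_snd, eps_entry, eps_entry]
      ext <;> simp
    have hnz : w2 ≠ 0 := by
      intro h
      have := congrArg (fun v : (Fin r → ZMod 2) × (Fin s → Ru) =>
        TrivSqZeroExt.snd (v.2 j1)) h
      simp only [h2 j1, comp_zero_snd, TrivSqZeroExt.snd_inr, TrivSqZeroExt.snd_zero]
        at this
      have hx : ∀ x y : ZMod 2, x + y = 0 → y = x := by decide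
      exact hj1 (hx _ _ this)
    have hmemw2 : w2 ∈ cycCode r s l g a :=
      Submodule.add_mem _ (Submodule.smul_mem _ _ hmem0)
        (Submodule.smul_mem _ _ (hmem 1))
    have hwt := hone w2 hmemw2 hnz
    rw [wt_eq, h1] at hwt
    simp only [h2, TrivSqZeroExt.fst_inr, TrivSqZeroExt.snd_inr, ne_eq,
      not_true_eq_false, false_and] at hwt
    rw [show hammingNorm (fun _ : Fin r => (0 : ZMod 2)) = 0 by
      simp [hammingNorm]] at hwt
    simp only [Finset.filter_false, Finset.card_empty, true_and, zero_add] at hwt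
    have hcardeq : (Finset.univ.filter (fun j : Fin s =>
        ¬ g.coeff j.val + g.coeff (sig s hs0 1 j).val = 0)).card = Ncard s g := by
      omega
    -- parity : the cardinality above is even
    have hpar : ((Finset.univ.filter (fun j : Fin s =>
        ¬ g.coeff j.val + g.coeff (sig s hs0 1 j).val = 0)).card : ZMod 2) = 0 := by
      have hsb : ((Finset.univ.filter (fun j : Fin s =>
          ¬ g.coeff j.val + g.coeff (sig s hs0 1 j).val = 0)).card : ZMod 2)
          = ∑ j : Fin s, (if g.coeff j.val + g.coeff (sig s hs0 1 j).val ≠ 0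
              then (1 : ZMod 2) else 0) := by
        rw [Finset.sum_boole]
      have hval : ∀ x : ZMod 2, (if x ≠ 0 then (1 : ZMod 2) else 0) = x := by decide
      rw [hsb]
      simp only [hval]
      rw [Finset.sum_add_distrib]
      have hre : (∑ j : Fin s, g.coeff ((fun j : Fin s => sig s hs0 1 j) j).val)
          = ∑ j : Fin s, g.coeff j.val :=
        (sig_one_bijective s hs0).sum_comp (fun k : Fin s => g.coeff k.val)
      rw [hre]
      exact CharTwo.add_self_eq_zero _
    rw [hcardeq] at hpar
    have : (Ncard s g : ZMod 2) = 1 := by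
      obtain ⟨t, ht⟩ : ∃ t, Ncard s g = 2 * t + 1 := ⟨Ncard s g / 2, by omega⟩
      rw [ht]
      push_cast
      rw [show (2 : ZMod 2) = 0 from rfl]
      ring
    rw [this] at hpar
    exact one_ne_zero hpar
  -- shift invariance propagates to all iterates
  have hiter : ∀ (i : ℕ) (j : Fin s), g.coeff (sig s hs0 i j).val = g.coeff j.val := by
    intro i
    induction i with
    | zero => intro j; rw [sig_zero]
    | succ i ih =>
      intro j
      rw [sig_succ, ih (sig s hs0 1 j), hshift j]
  have hall : ∀ k : Fin s, g.coeff k.val ≠ 0 := by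
    intro k
    obtain ⟨i, hi⟩ := (sig_bijective s hs0 j0).surjective k
    rw [← hi]
    show g.coeff (sig s hs0 i.val j0).val ≠ 0
    rw [hiter i.val j0]
    exact hj0
  have hNs : Ncard s g = s := by
    unfold Ncard
    rw [Finset.filter_true_of_mem (fun j _ => hall j)]
    simp
  omega
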